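/- arXiv:1305.7170 — 2 statements merged into one kernel-verified Lean document; each statement's English description precedes it below -/
import Mathlib

section
/- Let φ : ℝ^m → (−∞, +∞] be proper (φ ≢ +∞), convex and lower semicontinuous. Then the graph G := { (y, y*) ∈ ℝ^m × ℝ^m : y* ∈ ∂φ(y) } of the subdifferential operator ∂φ is maximal monotone: G is monotone, and every monotone subset of ℝ^m × ℝ^m containing G equals G. -/
open Set Metric

lemma lsc_exists_min {α : Type*} [TopologicalSpace α] [T2Space α] {ψ : α → EReal}
    (h : LowerSemicontinuous ψ) {S : Set α} (hS : IsCompact S) (hne : S.Nonempty) :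
    ∃ y₀ ∈ S, ∀ y ∈ S, ψ y₀ ≤ ψ y := by
  haveI : Nonempty S := hne.to_subtype
  set K : S → Set α := fun y => S ∩ {z | ψ z ≤ ψ y} with hK
  have hKcl : ∀ y : S, IsClosed (K y) := fun y =>
    hS.isClosed.inter (h.isClosed_preimage _)
  have hKc : ∀ y : S, IsCompact (K y) := fun y => hS.inter_right (h.isClosed_preimage _)
  have hKn : ∀ y : S, (K y).Nonempty := fun y => ⟨y, y.2, le_refl (ψ y)⟩
  have hdir : Directed (· ⊇ ·) K := by
    intro a b
    rcases le_total (ψ a) (ψ b) with hab | hab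
    · exact ⟨a, fun z hz => hz, fun z hz => ⟨hz.1, le_trans hz.2 hab⟩⟩
    · exact ⟨b, fun z hz => ⟨hz.1, le_trans hz.2 hab⟩, fun z hz => hz⟩
  obtain ⟨y₀, hy₀⟩ :=
    IsCompact.nonempty_iInter_of_directed_nonempty_isCompact_isClosed K hdir hKn hKc hKcl
  simp only [mem_iInter] at hy₀
  obtain ⟨s⟩ := ‹Nonempty S›
  exact ⟨y₀, (hy₀ s).1, fun y hy => (hy₀ ⟨y, hy⟩).2⟩

lemma lsc_add_cont {α : Type*} [TopologicalSpace α] {φ : α → EReal}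
    (hlsc : LowerSemicontinuous φ) (hbot : ∀ y, φ y ≠ ⊥) {q : α → ℝ} (hq : Continuous q) :
    LowerSemicontinuous fun y => φ y + ((q y : ℝ) : EReal) := by
  intro x c hc
  induction c with
  | bot =>
    filter_upwards with y
    rw [gt_iff_lt, bot_lt_iff_ne_bot]
    simp [EReal.add_eq_bot_iff, hbot y]
  | top => exact absurd (hc.trans_le le_top) (lt_irrefl _)
  | coe c =>
    obtain ⟨A, hA1, hA2⟩ : ∃ A : ℝ, (A : EReal) < φ x ∧ c - A < q x := by
      rcases eq_or_ne (φ x) ⊤ with h | h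
      · exact ⟨c - q x + 1, by rw [h]; exact EReal.coe_lt_top _, by linarith⟩
      · have hb := hbot x
        lift φ x to ℝ using ⟨h, hb⟩ with r hr
        rw [← EReal.coe_add, gt_iff_lt, EReal.coe_lt_coe_iff] at hc
        exact ⟨(c - q x + r) / 2, EReal.coe_lt_coe_iff.2 (by linarith), by linarith⟩
    have h1 := hlsc x _ hA1
    have h2 : ∀ᶠ y in nhds x, c - A < q y :=
      Filter.Tendsto.eventually_const_lt hA2 hq.continuousAt
    filter_upwards [h1, h2] with y hy1 hy2
    calc (c : EReal) = (A : EReal) + ((c - A : ℝ) : EReal) := by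
          rw [← EReal.coe_add]; norm_num
      _ < φ y + (q y : EReal) := EReal.add_lt_add hy1 (EReal.coe_lt_coe_iff.2 hy2)

lemma epi_closed {E : Type*} [NormedAddCommGroup E] {φ : E → EReal}
    (hlsc : LowerSemicontinuous φ) :
    IsClosed {p : E × ℝ | φ p.1 ≤ (p.2 : EReal)} := by
  have h := hlsc.isClosed_epigraph
  exact h.preimage
    (continuous_fst.prodMk (continuous_coe_real_ereal.comp continuous_snd))

lemma exists_affine_minorant {E : Type*} [NormedAddCommGroup E] [NormedSpace ℝ E]
    {φ : E → EReal} (hbot : ∀ y, φ y ≠ ⊥) (hproper : ∃ y, φ y ≠ ⊤)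
    (hconv : ∀ x y : E, ∀ a b : ℝ, 0 ≤ a → 0 ≤ b → a + b = 1 →
      φ (a • x + b • y) ≤ (a : EReal) * φ x + (b : EReal) * φ y)
    (hlsc : LowerSemicontinuous φ) :
    ∃ (L : E →L[ℝ] ℝ) (b : ℝ), ∀ y, ((L y + b : ℝ) : EReal) ≤ φ y := by
  obtain ⟨x₀, hx₀⟩ := hproper
  lift φ x₀ to ℝ using ⟨hx₀, hbot x₀⟩ with r hr
  set epi : Set (E × ℝ) := {p : E × ℝ | φ p.1 ≤ (p.2 : EReal)} with hepi
  have hcl : IsClosed epi := epi_closed hlsc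
  have hcv : Convex ℝ epi := by
    rintro ⟨y, s⟩ hys ⟨z, t⟩ hzt a b ha hb hab
    simp only [hepi, Set.mem_setOf_eq] at hys hzt ⊢
    calc φ (a • y + b • z) ≤ (a : EReal) * φ y + (b : EReal) * φ z :=
          hconv y z a b ha hb hab
      _ ≤ (a : EReal) * (s : EReal) + (b : EReal) * (t : EReal) := by
          gcongr
      _ = ((a * s + b * t : ℝ) : EReal) := by
          rw [EReal.coe_add, EReal.coe_mul, EReal.coe_mul]
  have hmem : (x₀, r) ∈ epi := by simp [hepi, ← hr]
  have hnot : (x₀, r - 1) ∉ epi := by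
    simp only [hepi, Set.mem_setOf_eq, ← hr, EReal.coe_le_coe_iff, not_le]
    linarith
  obtain ⟨f, u, hfu, hall⟩ := geometric_hahn_banach_point_closed hcv hcl hnot
  set c : ℝ := f (0, 1) with hc
  have hsplit : ∀ (y : E) (t : ℝ), f (y, t) = f (y, 0) + t * c := by
    intro y t
    have : (y, t) = (y, (0 : ℝ)) + t • ((0 : E), (1 : ℝ)) := by
      simp [Prod.ext_iff]
    rw [this, map_add, map_smul]
    simp [hc]
  have hcpos : 0 < c := by
    have h1 := hall _ hmem
    have := hsplit x₀ (r - 1)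
    have := hsplit x₀ r
    nlinarith [hfu]
  refine ⟨(-(1 / c)) • (f.comp (ContinuousLinearMap.inl ℝ E ℝ)), u / c, fun y => ?_⟩
  rcases eq_or_ne (φ y) ⊤ with h | h
  · rw [h]; exact le_top
  · lift φ y to ℝ using ⟨h, hbot y⟩ with t ht
    have hmem' : (y, t) ∈ epi := by
      show φ y ≤ ((t : ℝ) : EReal); rw [← ht]
    have h1 := hall _ hmem'
    rw [hsplit y t] at h1
    rw [EReal.coe_le_coe_iff]
    simp only [ContinuousLinearMap.smul_apply, ContinuousLinearMap.comp_apply,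
      ContinuousLinearMap.inl_apply, smul_eq_mul]
    rw [show -(1 / c) * f (y, 0) + u / c = (u - f (y, 0)) / c by ring]
    exact (div_le_iff₀ hcpos).2 (by linarith)


private lemma arith1 (ny nx nyx Ly b t c i nL nxs : ℝ)
    (hy : t + (nyx ^ 2 / 2 - i) ≤ c) (hmin : Ly + b ≤ t)
    (hL : -(nL * ny) ≤ Ly) (hxs : i ≤ nxs * ny) (h4 : (ny - nx) ^ 2 ≤ nyx ^ 2) :
    ny ^ 2 ≤ 2 * (c - b) + 2 * (nL + nxs + nx) * ny := by
  nlinarith [sq_nonneg nx]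

private lemma arith2 (t r s nu iwu iyxu ixsu qy qyt rt : ℝ)
    (ht0 : 0 < t)
    (hcv2 : rt ≤ t * s + (1 - t) * r)
    (hmin2 : r + qy ≤ rt + qyt)
    (hq3 : qyt = qy + t * iyxu + t ^ 2 * nu ^ 2 / 2 - t * ixsu)
    (hwu : iwu = ixsu - iyxu) :
    iwu + r ≤ s + t * nu ^ 2 / 2 := by
  have hmul : t * (iwu + r) ≤ t * (s + t * nu ^ 2 / 2) := by nlinarith
  exact le_of_mul_le_mul_left hmul ht0
/-- For a proper, convex, lsc `φ : ℝ^m → (−∞,+∞]`, the graph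
`G = {(y, y*) : y* ∈ ∂φ(y)}` of the subdifferential operator is maximal monotone:
`G` is monotone and every monotone subset of `ℝ^m × ℝ^m` containing `G` equals `G`. -/
theorem stmt_12 (m : ℕ) (φ : EuclideanSpace ℝ (Fin m) → EReal)
    (hbot : ∀ y, φ y ≠ ⊥)
    (hproper : ∃ y, φ y ≠ ⊤)
    (hconv : ∀ x y : EuclideanSpace ℝ (Fin m), ∀ a b : ℝ, 0 ≤ a → 0 ≤ b → a + b = 1 →
      φ (a • x + b • y) ≤ (a : EReal) * φ x + (b : EReal) * φ y)
    (hlsc : LowerSemicontinuous φ)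
    (G : Set (EuclideanSpace ℝ (Fin m) × EuclideanSpace ℝ (Fin m)))
    (hG : G = {p | ∀ v : EuclideanSpace ℝ (Fin m),
        ((inner ℝ p.2 (v - p.1) : ℝ) : EReal) + φ p.1 ≤ φ v}) :
    (∀ p ∈ G, ∀ q ∈ G, (0 : ℝ) ≤ inner ℝ (p.2 - q.2) (p.1 - q.1)) ∧
    (∀ H : Set (EuclideanSpace ℝ (Fin m) × EuclideanSpace ℝ (Fin m)),
      (∀ p ∈ H, ∀ q ∈ H, (0 : ℝ) ≤ inner ℝ (p.2 - q.2) (p.1 - q.1)) → G ⊆ H → H = G) := by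
  obtain ⟨x₀, hx₀⟩ := hproper
  have hr₀' : ((φ x₀).toReal : EReal) = φ x₀ := EReal.coe_toReal hx₀ (hbot x₀)
  set r₀ : ℝ := (φ x₀).toReal with hr₀def
  -- any point of G has finite φ value
  have hfin : ∀ a b : EuclideanSpace ℝ (Fin m),
      (∀ v, ((inner ℝ b (v - a) : ℝ) : EReal) + φ a ≤ φ v) → φ a ≠ ⊤ := by
    intro a b h htop
    have h1 := h x₀
    rw [htop, EReal.coe_add_top, top_le_iff] at h1
    exact hx₀ h1
  have mono : ∀ p ∈ G, ∀ q ∈ G, (0 : ℝ) ≤ inner ℝ (p.2 - q.2) (p.1 - q.1) := by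
    intro p hp q hq
    rw [hG, Set.mem_setOf_eq] at hp hq
    have hpt := hfin _ _ hp
    have hqt := hfin _ _ hq
    lift φ p.1 to ℝ using ⟨hpt, hbot p.1⟩ with r hr
    lift φ q.1 to ℝ using ⟨hqt, hbot q.1⟩ with s hs
    have h1 := hp q.1
    have h2 := hq p.1
    rw [← hs, ← EReal.coe_add, EReal.coe_le_coe_iff] at h1
    rw [← hr, ← EReal.coe_add, EReal.coe_le_coe_iff] at h2
    simp only [inner_sub_left, inner_sub_right] at h1 h2 ⊢
    linarith
  refine ⟨mono, fun H hHmono hGH => ?_⟩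
  refine Set.Subset.antisymm (fun p hp => ?_) hGH
  obtain ⟨x, xs⟩ := p
  -- the Minty argument
  obtain ⟨L, b, hLb⟩ := exists_affine_minorant hbot ⟨x₀, hx₀⟩ hconv hlsc
  set q : EuclideanSpace ℝ (Fin m) → ℝ :=
    fun y => ‖y - x‖ ^ 2 / 2 - inner ℝ xs y with hq
  have hqcont : Continuous q := by
    apply Continuous.sub
    · exact (((continuous_id.sub continuous_const).norm).pow 2).div_const 2
    · exact continuous_const.inner continuous_id
  have hψlsc : LowerSemicontinuous (fun y => φ y + ((q y : ℝ) : EReal)) :=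
    lsc_add_cont hlsc hbot hqcont
  set ψ : EuclideanSpace ℝ (Fin m) → EReal := fun y => φ y + ((q y : ℝ) : EReal) with hψ
  set c : ℝ := r₀ + q x₀ with hc
  set S : Set (EuclideanSpace ℝ (Fin m)) := {y | ψ y ≤ (c : EReal)} with hS
  have hScl : IsClosed S := hψlsc.isClosed_preimage _
  have hx₀S : x₀ ∈ S := by
    simp only [hS, Set.mem_setOf_eq, hψ, ← hr₀', ← EReal.coe_add, EReal.coe_le_coe_iff, hc,
      le_refl]
  -- S is bounded
  have hSsub : S ⊆ Metric.closedBall 0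
      ((‖L‖ + ‖xs‖ + ‖x‖) + Real.sqrt (max ((‖L‖ + ‖xs‖ + ‖x‖) ^ 2 + 2 * (c - b)) 0)) := by
    intro y hy
    simp only [hS, Set.mem_setOf_eq, hψ] at hy
    have hyt : φ y ≠ ⊤ := by
      intro h
      rw [h, EReal.top_add_coe, top_le_iff] at hy
      exact (EReal.coe_ne_top c) hy
    lift φ y to ℝ using ⟨hyt, hbot y⟩ with t ht
    rw [← EReal.coe_add, EReal.coe_le_coe_iff] at hy
    have hmin : L y + b ≤ t := by
      have h5 := hLb y; rw [← ht, EReal.coe_le_coe_iff] at h5; exact h5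
    have hL : -(‖L‖ * ‖y‖) ≤ L y := by
      have h6 := L.le_opNorm y
      rw [Real.norm_eq_abs] at h6
      have := abs_le.1 h6
      linarith [this.1]
    have hxs : (inner ℝ xs y : ℝ) ≤ ‖xs‖ * ‖y‖ := real_inner_le_norm xs y
    have h4 : (‖y‖ - ‖x‖) ^ 2 ≤ ‖y - x‖ ^ 2 := by
      have h7 := abs_norm_sub_norm_le y x
      nlinarith [abs_nonneg (‖y‖ - ‖x‖), sq_abs (‖y‖ - ‖x‖)]
    have hqy : q y = ‖y - x‖ ^ 2 / 2 - inner ℝ xs y := rfl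
    rw [hqy] at hy
    have hnorm2 : ‖y‖ ^ 2 ≤ 2 * (c - b) + 2 * (‖L‖ + ‖xs‖ + ‖x‖) * ‖y‖ :=
      arith1 ‖y‖ ‖x‖ ‖y - x‖ (L y) b t c (inner ℝ xs y) ‖L‖ ‖xs‖ hy hmin hL hxs h4
    rw [Metric.mem_closedBall, dist_zero_right]
    rcases le_or_gt ‖y‖ (‖L‖ + ‖xs‖ + ‖x‖) with h8 | h8
    · have := Real.sqrt_nonneg (max ((‖L‖ + ‖xs‖ + ‖x‖) ^ 2 + 2 * (c - b)) 0)
      linarith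
    · have hkey : (‖y‖ - (‖L‖ + ‖xs‖ + ‖x‖)) ^ 2
          ≤ max ((‖L‖ + ‖xs‖ + ‖x‖) ^ 2 + 2 * (c - b)) 0 := by
        have hmax := le_max_left ((‖L‖ + ‖xs‖ + ‖x‖) ^ 2 + 2 * (c - b)) (0 : ℝ)
        nlinarith [hnorm2]
      have h9 : ‖y‖ - (‖L‖ + ‖xs‖ + ‖x‖)
          = Real.sqrt ((‖y‖ - (‖L‖ + ‖xs‖ + ‖x‖)) ^ 2) := by
        rw [Real.sqrt_sq (by linarith)]
      have h10 := Real.sqrt_le_sqrt hkey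
      linarith [h9 ▸ h10]
  have hScomp : IsCompact S :=
    (isCompact_closedBall (0 : EuclideanSpace ℝ (Fin m)) _).of_isClosed_subset hScl hSsub
  obtain ⟨y₀, hy₀S, hy₀min⟩ := lsc_exists_min hψlsc hScomp ⟨x₀, hx₀S⟩
  have hy₀glob : ∀ y, ψ y₀ ≤ ψ y := by
    intro y
    by_cases h : y ∈ S
    · exact hy₀min y h
    · have h1 : (c : EReal) < ψ y := not_le.1 h
      exact le_trans hy₀S h1.le
  have hy₀t : φ y₀ ≠ ⊤ := by
    intro h
    have h1 : ψ y₀ ≤ (c : EReal) := hy₀S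
    rw [hψ] at h1
    simp only at h1
    rw [h, EReal.top_add_coe, top_le_iff] at h1
    exact (EReal.coe_ne_top c) h1
  lift φ y₀ to ℝ using ⟨hy₀t, hbot y₀⟩ with r hr
  set w : EuclideanSpace ℝ (Fin m) := xs - (y₀ - x) with hw
  have hwG : (y₀, w) ∈ G := by
    rw [hG, Set.mem_setOf_eq]
    intro v
    show ((inner ℝ w (v - y₀) : ℝ) : EReal) + φ y₀ ≤ φ v
    rcases eq_or_ne (φ v) ⊤ with hv | hv
    · rw [hv]; exact le_top
    lift φ v to ℝ using ⟨hv, hbot v⟩ with s hsv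
    rw [← hr, ← EReal.coe_add, EReal.coe_le_coe_iff]
    set u : EuclideanSpace ℝ (Fin m) := v - y₀ with hu
    have key : ∀ t : ℝ, 0 < t → t < 1 →
        (inner ℝ w u : ℝ) + r ≤ s + t * ‖u‖ ^ 2 / 2 := by
      intro t ht0 ht1
      have hcv := hconv v y₀ t (1 - t) ht0.le (by linarith) (by ring)
      have hyt_eq : t • v + (1 - t) • y₀ = y₀ + t • u := by
        rw [hu, smul_sub, sub_smul, one_smul]
        abel
      rw [hyt_eq, ← hr, ← hsv] at hcv
      have hcv2 : φ (y₀ + t • u) ≤ ((t * s + (1 - t) * r : ℝ) : EReal) := by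
        rw [EReal.coe_add, EReal.coe_mul, EReal.coe_mul]
        exact hcv
      have hytne : φ (y₀ + t • u) ≠ ⊤ := fun h => by
        rw [h, top_le_iff] at hcv2; exact (EReal.coe_ne_top _) hcv2
      lift φ (y₀ + t • u) to ℝ using ⟨hytne, hbot _⟩ with rt hrt
      rw [EReal.coe_le_coe_iff] at hcv2
      have hmin2 : r + q y₀ ≤ rt + q (y₀ + t • u) := by
        rw [← EReal.coe_le_coe_iff]
        push_cast
        rw [hr, hrt]
        exact hy₀glob (y₀ + t • u)
      -- compute q (y₀ + t • u)
      have hq3 : q (y₀ + t • u) = q y₀ + t * (inner ℝ (y₀ - x) u : ℝ)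
          + t ^ 2 * ‖u‖ ^ 2 / 2 - t * (inner ℝ xs u : ℝ) := by
        show ‖y₀ + t • u - x‖ ^ 2 / 2 - (inner ℝ xs (y₀ + t • u) : ℝ)
            = (‖y₀ - x‖ ^ 2 / 2 - (inner ℝ xs y₀ : ℝ)) + t * (inner ℝ (y₀ - x) u : ℝ)
              + t ^ 2 * ‖u‖ ^ 2 / 2 - t * (inner ℝ xs u : ℝ)
        rw [add_sub_right_comm y₀ (t • u) x, norm_add_sq_real, inner_add_right,
          real_inner_smul_right, real_inner_smul_right, norm_smul, Real.norm_eq_abs,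
          mul_pow, sq_abs]
        ring
      have hwu : (inner ℝ w u : ℝ) = (inner ℝ xs u : ℝ) - (inner ℝ (y₀ - x) u : ℝ) := by
        rw [show w = xs - (y₀ - x) from rfl, inner_sub_left]
      exact arith2 t r s ‖u‖ (inner ℝ w u) (inner ℝ (y₀ - x) u) (inner ℝ xs u)
        (q y₀) (q (y₀ + t • u)) rt ht0 hcv2 hmin2 hq3 hwu
    -- pass to the limit t → 0
    refine le_of_forall_pos_le_add fun ε hε => ?_
    set t : ℝ := min (1 / 2) (ε / (‖u‖ ^ 2 + 1)) with htdef
    have hn : (0 : ℝ) < ‖u‖ ^ 2 + 1 := by positivity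
    have ht0 : 0 < t := lt_min (by norm_num) (div_pos hε hn)
    have ht1 : t < 1 := lt_of_le_of_lt (min_le_left _ _) (by norm_num)
    have hkey := key t ht0 ht1
    have htb : t * (‖u‖ ^ 2 + 1) ≤ ε := by
      have := min_le_right (1 / 2) (ε / (‖u‖ ^ 2 + 1))
      calc t * (‖u‖ ^ 2 + 1) ≤ (ε / (‖u‖ ^ 2 + 1)) * (‖u‖ ^ 2 + 1) := by
            apply mul_le_mul_of_nonneg_right _ hn.le
            exact this
        _ = ε := by field_simp
    nlinarith [sq_nonneg ‖u‖, ht0]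
  -- monotonicity of H forces y₀ = x and w = xs
  have hyH := hGH hwG
  have hm : (0 : ℝ) ≤ inner ℝ (xs - w) (x - y₀) := hHmono (x, xs) hp (y₀, w) hyH
  have hsub : xs - w = y₀ - x := by rw [hw]; abel
  rw [hsub] at hm
  have hinner : (inner ℝ (y₀ - x) (x - y₀) : ℝ) = -‖x - y₀‖ ^ 2 := by
    rw [show y₀ - x = -(x - y₀) by abel, inner_neg_left, real_inner_self_eq_norm_sq]
  rw [hinner] at hm
  have hxy : x = y₀ := by
    have h1 : ‖x - y₀‖ = 0 := by nlinarith [norm_nonneg (x - y₀), sq_nonneg ‖x - y₀‖]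
    have := norm_eq_zero.1 h1
    exact sub_eq_zero.1 this
  have hws : w = xs := by rw [hw, ← hxy, sub_self, sub_zero]
  rw [show ((x, xs) : EuclideanSpace ℝ (Fin m) × EuclideanSpace ℝ (Fin m)) = (y₀, w) by
    rw [hxy, hws]]
  exact hwG
end

section
/- Let A ⊆ ℝ × ℝ be a maximal monotone operator on ℝ. Then there exists a proper (ψ ≢ +∞), convex, lower semicontinuous function ψ : ℝ → (−∞, +∞] such that A coincides with the graph of the subdifferential of ψ, i.e., A = { (y, y*) ∈ ℝ × ℝ : y*(v − y) + ψ(y) ≤ ψ(v) for all v ∈ ℝ }. -/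

noncomputable def sval : ℝ × ℝ → List (ℝ × ℝ) → ℝ → ℝ
  | p, [], v => p.2 * (v - p.1)
  | p, q :: l, v => p.2 * (q.1 - p.1) + sval q l v

lemma sval_shift (p : ℝ × ℝ) (l : List (ℝ × ℝ)) (v w : ℝ) :
    sval p l v = sval p l w + ((p :: l).getLast (by simp)).2 * (v - w) := by
  induction l generalizing p with
  | nil => simp [sval]; ring
  | cons q t ih =>
    rw [List.getLast_cons (by simp)]
    simp only [sval]
    rw [ih q]
    ring

lemma sval_append (p q : ℝ × ℝ) (u w : List (ℝ × ℝ)) (v : ℝ) :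
    sval p (u ++ q :: w) v = sval p u q.1 + sval q w v := by
  induction u generalizing p with
  | nil => simp [sval]
  | cons r t ih => simp only [List.cons_append, sval, List.append_eq]; rw [ih r]; ring

lemma sval_affine (p : ℝ × ℝ) (l : List (ℝ × ℝ)) (x y a b : ℝ) (hab : a + b = 1) :
    sval p l (a * x + b * y) = a * sval p l x + b * sval p l y := by
  induction l generalizing p with
  | nil => simp only [sval]; linear_combination (p.2 * p.1) * hab
  | cons q t ih =>
    simp only [sval]
    rw [ih q]
    linear_combination (-(p.2 * (q.1 - p.1))) * hab

lemma sval_continuous (p : ℝ × ℝ) (l : List (ℝ × ℝ)) : Continuous (sval p l) := by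
  induction l generalizing p with
  | nil => simpa [sval] using (by fun_prop : Continuous fun v : ℝ => p.2 * (v - p.1))
  | cons q t ih => exact continuous_const.add (ih q)

lemma exists_lexmax (l : List (ℝ × ℝ)) (p : ℝ × ℝ) :
    ∃ q ∈ p :: l, ∀ r ∈ p :: l, r.1 ≤ q.1 ∧ (r.1 = q.1 → r.2 ≤ q.2) := by
  induction l generalizing p with
  | nil =>
    refine ⟨p, by simp, ?_⟩
    intro r hr
    simp only [List.mem_singleton] at hr
    subst hr; exact ⟨le_rfl, fun _ => le_rfl⟩
  | cons h t ih =>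
    obtain ⟨q, hq, hmax⟩ := ih h
    by_cases hc : p.1 < q.1 ∨ (p.1 = q.1 ∧ p.2 ≤ q.2)
    · refine ⟨q, List.mem_cons_of_mem _ hq, ?_⟩
      intro r hr
      rcases List.mem_cons.1 hr with rfl | hr
      · rcases hc with h1 | ⟨h1, h2⟩
        · exact ⟨h1.le, fun he => absurd he h1.ne⟩
        · exact ⟨h1.le, fun _ => h2⟩
      · exact hmax r hr
    · push_neg at hc
      refine ⟨p, List.mem_cons_self, ?_⟩
      intro r hr
      rcases List.mem_cons.1 hr with rfl | hr
      · exact ⟨le_rfl, fun _ => le_rfl⟩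
      · obtain ⟨h1, h2⟩ := hmax r hr
        refine ⟨h1.trans hc.1, fun he => ?_⟩
        have hq1 : q.1 = p.1 := le_antisymm hc.1 (he ▸ h1)
        exact (h2 (he.trans hq1.symm)).trans (hc.2 hq1.symm).le

lemma slope_le {A : Set (ℝ × ℝ)}
    (hmono : ∀ p ∈ A, ∀ q ∈ A, (0 : ℝ) ≤ (p.2 - q.2) * (p.1 - q.1))
    {a q : ℝ × ℝ} (haA : a ∈ A) (hqA : q ∈ A)
    (h1 : a.1 ≤ q.1) (h2 : a.1 = q.1 → a.2 ≤ q.2) : a.2 ≤ q.2 := by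
  rcases eq_or_lt_of_le h1 with heq | hlt
  · exact h2 heq
  · nlinarith [hmono a haA q hqA]

lemma sval_cycle {A : Set (ℝ × ℝ)}
    (hmono : ∀ p ∈ A, ∀ q ∈ A, (0 : ℝ) ≤ (p.2 - q.2) * (p.1 - q.1)) :
    ∀ (n : ℕ) (l : List (ℝ × ℝ)), l.length = n → (∀ r ∈ l, r ∈ A) →
      ∀ p ∈ A, sval p l p.1 ≤ 0 := by
  intro n
  induction n with
  | zero =>
    intro l hl _ p _
    rw [List.length_eq_zero_iff] at hl
    subst hl
    simp [sval]
  | succ n ih =>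
    intro l hl hlA p hp
    obtain ⟨q, hq, hqmax⟩ := exists_lexmax l p
    have hmem : ∀ r ∈ p :: l, r ∈ A := by
      intro r hr
      rcases List.mem_cons.1 hr with rfl | hr
      · exact hp
      · exact hlA r hr
    have hqA : q ∈ A := hmem q hq
    rcases List.mem_cons.1 hq with rfl | hql
    · -- q (= the old p) is the lex max
      cases l with
      | nil => simp at hl
      | cons h t =>
        have htA : ∀ r ∈ t, r ∈ A := fun r hr => hlA r (List.mem_cons_of_mem _ hr)
        have hhA : h ∈ A := hlA h (List.mem_cons_self)
        have hIH : sval h t h.1 ≤ 0 := ih t (by simpa using hl) htA h hhA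
        set s := ((h :: t).getLast (by simp)) with hs
        have hsMem : s ∈ h :: t := List.getLast_mem _
        have hsA : s ∈ A := hlA s hsMem
        have hs2 : s.2 ≤ q.2 := by
          obtain ⟨h1, h2⟩ := hqmax s (List.mem_cons_of_mem _ hsMem)
          exact slope_le hmono hsA hqA h1 h2
        have hh1 : h.1 ≤ q.1 := (hqmax h (List.mem_cons_of_mem _ (List.mem_cons_self))).1
        have hshift : sval h t q.1 = sval h t h.1 + s.2 * (q.1 - h.1) := by
          rw [sval_shift h t q.1 h.1]
        show sval q (h :: t) q.1 ≤ 0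
        simp only [sval]
        rw [hshift]
        nlinarith
    · -- q ∈ l
      obtain ⟨u, w, rfl⟩ := List.append_of_mem hql
      have haMem' : ((p :: u).getLast (by simp)) ∈ p :: u := List.getLast_mem _
      set a := ((p :: u).getLast (by simp)) with ha
      have haMem : a ∈ p :: (u ++ q :: w) := by
        rcases List.mem_cons.1 haMem' with h' | h'
        · exact h' ▸ List.mem_cons_self
        · exact List.mem_cons_of_mem _ (List.mem_append_left _ h')
      have haA : a ∈ A := hmem a haMem
      have ha2 : a.2 ≤ q.2 := by
        obtain ⟨h1, h2⟩ := hqmax a haMem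
        exact slope_le hmono haA hqA h1 h2
      have huA : ∀ r ∈ u, r ∈ A := fun r hr => hlA r (List.mem_append_left _ hr)
      cases w with
      | nil =>
        have h1 : sval p (u ++ [q]) p.1 = sval p u q.1 + q.2 * (p.1 - q.1) := by
          rw [sval_append p q u [] p.1]; simp [sval]
        have h2 : sval p u p.1 = sval p u q.1 + a.2 * (p.1 - q.1) := by
          rw [sval_shift p u p.1 q.1]
        have hp1 : p.1 ≤ q.1 := (hqmax p (List.mem_cons_self)).1
        have hIH : sval p u p.1 ≤ 0 := by
          refine ih u ?_ huA p hp
          have := hl; simp at this; omega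
        rw [h1]
        nlinarith
      | cons b w' =>
        have hbMem : b ∈ p :: (u ++ q :: b :: w') := by
          exact List.mem_cons_of_mem _ (List.mem_append_right _ (by simp))
        have hb1 : b.1 ≤ q.1 := (hqmax b hbMem).1
        have h1 : sval p (u ++ q :: b :: w') p.1
            = sval p u q.1 + (q.2 * (b.1 - q.1) + sval b w' p.1) := by
          rw [sval_append p q u (b :: w') p.1]; simp [sval]
        have h2 : sval p (u ++ b :: w') p.1 = sval p u b.1 + sval b w' p.1 :=
          sval_append p b u w' p.1
        have h3 : sval p u b.1 = sval p u q.1 + a.2 * (b.1 - q.1) := by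
          rw [sval_shift p u b.1 q.1]
        have hIH : sval p (u ++ b :: w') p.1 ≤ 0 := by
          refine ih (u ++ b :: w') ?_ ?_ p hp
          · have := hl; simp at this ⊢; omega
          · intro r hr
            rcases List.mem_append.1 hr with h' | h'
            · exact huA r h'
            · rcases List.mem_cons.1 h' with rfl | h''
              · exact hmem _ hbMem
              · exact hlA r (List.mem_append_right _ (List.mem_cons_of_mem _ (List.mem_cons_of_mem _ h'')))
        rw [h1]
        nlinarith [hIH, h2, h3]

/-- Every maximal monotone operator `A ⊆ ℝ × ℝ` is the graph of the
subdifferential of some proper, convex, lower semicontinuous function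
`ψ : ℝ → (−∞,+∞]`. -/
theorem stmt_13 (A : Set (ℝ × ℝ))
    (hmono : ∀ p ∈ A, ∀ q ∈ A, (0 : ℝ) ≤ (p.2 - q.2) * (p.1 - q.1))
    (hmax : ∀ H : Set (ℝ × ℝ),
      (∀ p ∈ H, ∀ q ∈ H, (0 : ℝ) ≤ (p.2 - q.2) * (p.1 - q.1)) → A ⊆ H → H = A) :
    ∃ ψ : ℝ → EReal,
      (∀ y, ψ y ≠ ⊥) ∧
      (∃ y, ψ y ≠ ⊤) ∧
      (∀ x y : ℝ, ∀ a b : ℝ, 0 ≤ a → 0 ≤ b → a + b = 1 →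
        ψ (a * x + b * y) ≤ (a : EReal) * ψ x + (b : EReal) * ψ y) ∧
      LowerSemicontinuous ψ ∧
      A = {p : ℝ × ℝ | ∀ v : ℝ, ((p.2 * (v - p.1) : ℝ) : EReal) + ψ p.1 ≤ ψ v} := by
  -- A is nonempty
  have hne : A.Nonempty := by
    by_contra h
    rw [Set.not_nonempty_iff_eq_empty] at h
    have h1 : ({((0 : ℝ), (0 : ℝ))} : Set (ℝ × ℝ)) = A := by
      refine hmax _ ?_ ?_
      · intro p hp q hq
        simp only [Set.mem_singleton_iff] at hp hq
        subst hp; subst hq; simp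
      · rw [h]; exact Set.empty_subset _
    rw [h] at h1
    exact absurd h1 (by simp [Set.eq_empty_iff_forall_notMem])
  obtain ⟨p₀, hp₀⟩ := hne
  -- the function
  set ψ : ℝ → EReal :=
    fun v => ⨆ c : {l : List (ℝ × ℝ) // ∀ r ∈ l, r ∈ A}, ((sval p₀ c.1 v : ℝ) : EReal)
    with hψ
  have h_lb : ∀ v : ℝ, ((sval p₀ [] v : ℝ) : EReal) ≤ ψ v := fun v =>
    le_iSup (fun c : {l : List (ℝ × ℝ) // ∀ r ∈ l, r ∈ A} => ((sval p₀ c.1 v : ℝ) : EReal))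
      ⟨[], by simp⟩
  have h_bot : ∀ v, ψ v ≠ ⊥ := by
    intro v
    exact ((lt_of_lt_of_le (EReal.bot_lt_coe _) (h_lb v))).ne'
  have h_le0 : ψ p₀.1 ≤ 0 := by
    refine iSup_le fun c => ?_
    have := sval_cycle hmono c.1.length c.1 rfl c.2 p₀ hp₀
    exact_mod_cast EReal.coe_nonpos.2 this
  have h_top : ψ p₀.1 ≠ ⊤ := fun h => by simp [h] at h_le0
  -- subgradient inequality for points of A
  have h_sub : ∀ p ∈ A, ∀ v : ℝ, ((p.2 * (v - p.1) : ℝ) : EReal) + ψ p.1 ≤ ψ v := by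
    intro p hp v
    by_cases htop : ψ v = ⊤
    · rw [htop]; exact le_top
    have hψv : ψ v = ((ψ v).toReal : ℝ) := (EReal.coe_toReal htop (h_bot v)).symm
    set s := (ψ v).toReal with hsdef
    have hc : ∀ c : {l : List (ℝ × ℝ) // ∀ r ∈ l, r ∈ A},
        sval p₀ c.1 p.1 + p.2 * (v - p.1) ≤ s := by
      intro c
      have hmem : ∀ r ∈ c.1 ++ [p], r ∈ A := by
        intro r hr
        rcases List.mem_append.1 hr with h' | h'
        · exact c.2 r h'
        · simp only [List.mem_singleton] at h'; exact h' ▸ hp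
      have hle : ((sval p₀ (c.1 ++ [p]) v : ℝ) : EReal) ≤ ψ v :=
        le_iSup (fun c : {l : List (ℝ × ℝ) // ∀ r ∈ l, r ∈ A} =>
          ((sval p₀ c.1 v : ℝ) : EReal)) ⟨c.1 ++ [p], hmem⟩
      rw [hψv, EReal.coe_le_coe_iff] at hle
      have hval : sval p₀ (c.1 ++ [p]) v = sval p₀ c.1 p.1 + p.2 * (v - p.1) := by
        have h := sval_append p₀ p c.1 [] v
        simpa [sval] using h
      rw [hval] at hle
      linarith
    have h1 : ψ p.1 ≤ ((s - p.2 * (v - p.1) : ℝ) : EReal) := by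
      refine iSup_le fun c => ?_
      exact EReal.coe_le_coe_iff.2 (by linarith [hc c])
    calc ((p.2 * (v - p.1) : ℝ) : EReal) + ψ p.1
        ≤ ((p.2 * (v - p.1) : ℝ) : EReal) + ((s - p.2 * (v - p.1) : ℝ) : EReal) :=
          add_le_add_right h1 _
      _ = ((s : ℝ) : EReal) := by rw [← EReal.coe_add]; congr 1; ring
      _ = ψ v := hψv.symm
  -- convexity
  have h_conv : ∀ x y : ℝ, ∀ a b : ℝ, 0 ≤ a → 0 ≤ b → a + b = 1 →
      ψ (a * x + b * y) ≤ (a : EReal) * ψ x + (b : EReal) * ψ y := by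
    intro x y a b ha hb hab
    refine iSup_le fun c => ?_
    rw [sval_affine p₀ c.1 x y a b hab, EReal.coe_add, EReal.coe_mul, EReal.coe_mul]
    refine add_le_add ?_ ?_
    · exact mul_le_mul_of_nonneg_left
        (le_iSup (fun c : {l : List (ℝ × ℝ) // ∀ r ∈ l, r ∈ A} =>
          ((sval p₀ c.1 x : ℝ) : EReal)) c) (EReal.coe_nonneg.2 ha)
    · exact mul_le_mul_of_nonneg_left
        (le_iSup (fun c : {l : List (ℝ × ℝ) // ∀ r ∈ l, r ∈ A} =>
          ((sval p₀ c.1 y : ℝ) : EReal)) c) (EReal.coe_nonneg.2 hb)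
  -- lower semicontinuity
  have h_lsc : LowerSemicontinuous ψ := by
    refine lowerSemicontinuous_iSup fun c => ?_
    exact (continuous_coe_real_ereal.comp (sval_continuous p₀ c.1)).lowerSemicontinuous
  -- the set equality
  set H : Set (ℝ × ℝ) :=
    {p : ℝ × ℝ | ∀ v : ℝ, ((p.2 * (v - p.1) : ℝ) : EReal) + ψ p.1 ≤ ψ v} with hH
  have hAH : A ⊆ H := fun p hp v => h_sub p hp v
  have hfin : ∀ r ∈ H, ψ r.1 ≠ ⊤ := by
    intro r hr hT
    have h1 := hr p₀.1
    rw [hT, EReal.coe_add_top] at h1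
    rw [top_le_iff] at h1
    exact h_top h1
  have hHmono : ∀ p ∈ H, ∀ q ∈ H, (0 : ℝ) ≤ (p.2 - q.2) * (p.1 - q.1) := by
    intro p hp q hq
    have hpfin : ψ p.1 = (((ψ p.1).toReal : ℝ) : EReal) := (EReal.coe_toReal (hfin p hp) (h_bot p.1)).symm
    have hqfin : ψ q.1 = (((ψ q.1).toReal : ℝ) : EReal) := (EReal.coe_toReal (hfin q hq) (h_bot q.1)).symm
    have h1 := hp q.1
    have h2 := hq p.1
    rw [hpfin, hqfin, ← EReal.coe_add, EReal.coe_le_coe_iff] at h1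
    rw [hqfin, hpfin, ← EReal.coe_add, EReal.coe_le_coe_iff] at h2
    nlinarith
  exact ⟨ψ, h_bot, ⟨p₀.1, h_top⟩, h_conv, h_lsc, (hmax H hHmono hAH).symm⟩
end
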